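/- Let B ∈ ℂ^{n×k} have rank k with unique orthonormal polar factor P_*, and let P ∈ ℂ^{n×k} have orthonormal columns. Then ‖sin Θ(R(P), R(P_*))‖_F ≤ √(2(‖B‖_tr − ‖Pᴴ B‖_tr) / σ_min(B)). -/

import Mathlib

open scoped ComplexOrder
open Matrix

/-- The tuple `f` rearranged into decreasing order; `sortedDesc f 0` is the largest entry. -/
noncomputable def sortedDesc {m : ℕ} (f : Fin m → ℝ) : Fin m → ℝ :=
  fun i => (f ∘ Tuple.sort f) i.rev

/-- The singular values of a complex matrix, in decreasing order. -/
noncomputable def sv {n k : ℕ} (B : Matrix (Fin n) (Fin k) ℂ) : Fin k → ℝ :=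
  sortedDesc fun i =>
    Real.sqrt ((Matrix.posSemidef_conjTranspose_mul_self B).isHermitian.eigenvalues i)

/-- The trace (nuclear) norm: the sum of the singular values. -/
noncomputable def trNorm {n k : ℕ} (B : Matrix (Fin n) (Fin k) ℂ) : ℝ := ∑ i, sv B i

/-- The Frobenius norm. -/
noncomputable def frobNorm {n k : ℕ} (A : Matrix (Fin n) (Fin k) ℂ) : ℝ :=
  Real.sqrt (∑ i, ∑ j, ‖A i j‖ ^ 2)

/-- `‖sin Θ(R(X), R(Y))‖_F` where `Θ` is the diagonal matrix of canonical angles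
`θ_i = arccos σ_i(Xᴴ Y)` between the column spaces of `X` and `Y`. -/
noncomputable def sinThetaF {n k : ℕ} (X Y : Matrix (Fin n) (Fin k) ℂ) : ℝ :=
  Real.sqrt (∑ i, Real.sin (Real.arccos (sv (Xᴴ * Y) i)) ^ 2)

/-- The smallest singular value. -/
noncomputable def smin {n k : ℕ} (B : Matrix (Fin n) (Fin k) ℂ) : ℝ := ⨅ i, sv B i

/-- The spectral norm (largest singular value). -/
noncomputable def s2norm {n k : ℕ} (B : Matrix (Fin n) (Fin k) ℂ) : ℝ := ⨆ i, sv B i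

/-- The square root of a positive semidefinite matrix, as `Matrix.PosSemidef.sqrt` was defined
in the older Mathlib (that definition is gone). -/
noncomputable def psdSqrt {k : ℕ} {A : Matrix (Fin k) (Fin k) ℂ} (hA : A.PosSemidef) :
    Matrix (Fin k) (Fin k) ℂ :=
  hA.isHermitian.eigenvectorUnitary.1 * diagonal ((↑) ∘ (√·) ∘ hA.isHermitian.eigenvalues) *
    (star hA.isHermitian.eigenvectorUnitary : Matrix (Fin k) (Fin k) ℂ)

/-- The orthonormal polar factor `B (Bᴴ B)^{-1/2}` (for `B` of full column rank). -/
noncomputable def polarFactor {n k : ℕ} (B : Matrix (Fin n) (Fin k) ℂ) :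
    Matrix (Fin n) (Fin k) ℂ :=
  B * (psdSqrt (Matrix.posSemidef_conjTranspose_mul_self B))⁻¹

/-- Eigenvalues of a Hermitian matrix, in decreasing order. -/
noncomputable def eigsDesc {n : ℕ} {H : Matrix (Fin n) (Fin n) ℂ} (hH : H.IsHermitian) :
    Fin n → ℝ :=
  sortedDesc hH.eigenvalues

section Aux

open Finset Complex

variable {m : ℕ}

lemma psdSqrt_mul_self {S : Matrix (Fin m) (Fin m) ℂ} (hS : S.PosSemidef) :
    psdSqrt hS * psdSqrt hS = S := by
  have hU : (star hS.isHermitian.eigenvectorUnitary : Matrix (Fin m) (Fin m) ℂ) *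
      hS.isHermitian.eigenvectorUnitary.1 = 1 :=
    Matrix.mem_unitaryGroup_iff'.mp hS.isHermitian.eigenvectorUnitary.2
  conv_rhs => rw [hS.isHermitian.spectral_theorem, Unitary.conjStarAlgAut_apply]
  simp only [psdSqrt, Matrix.mul_assoc]
  rw [← Matrix.mul_assoc (star _ : Matrix (Fin m) (Fin m) ℂ) _ (diagonal _ * _), hU,
    Matrix.one_mul, ← Matrix.mul_assoc (diagonal _), diagonal_mul_diagonal]
  have hd : (fun i => ((↑) ∘ (√·) ∘ hS.isHermitian.eigenvalues) i *
      ((↑) ∘ (√·) ∘ hS.isHermitian.eigenvalues) i) =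
      (RCLike.ofReal ∘ hS.isHermitian.eigenvalues : Fin m → ℂ) := by
    funext i
    simp only [Function.comp_apply]
    rw [← Complex.ofReal_mul, Real.mul_self_sqrt (hS.eigenvalues_nonneg i)]
    rfl
  rw [hd]

lemma posSemidef_psdSqrt {S : Matrix (Fin m) (Fin m) ℂ} (hS : S.PosSemidef) :
    (psdSqrt hS).PosSemidef := by
  have hD : (diagonal ((↑) ∘ (√·) ∘ hS.isHermitian.eigenvalues) :
      Matrix (Fin m) (Fin m) ℂ).PosSemidef :=
    Matrix.posSemidef_diagonal_iff.mpr fun i => Complex.zero_le_real.mpr (Real.sqrt_nonneg _)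
  have := hD.mul_mul_conjTranspose_same hS.isHermitian.eigenvectorUnitary.1
  unfold psdSqrt
  rwa [Matrix.star_eq_conjTranspose]

lemma sum_comp_sortedDesc (h : ℝ → ℝ) (f : Fin m → ℝ) :
    ∑ i, h (sortedDesc f i) = ∑ i, h (f i) := by
  have he : ∀ i, sortedDesc f i = f ((Fin.revPerm.trans (Tuple.sort f)) i) := fun i => rfl
  simp_rw [he]
  exact Equiv.sum_comp (Fin.revPerm.trans (Tuple.sort f)) (fun j => h (f j))

lemma sortedDesc_exists (f : Fin m → ℝ) (j : Fin m) : ∃ i, sortedDesc f i = f j := by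
  refine ⟨((Tuple.sort f)⁻¹ j).rev, ?_⟩
  simp [sortedDesc, Fin.rev_rev]

lemma sortedDesc_eq (f : Fin m → ℝ) (i : Fin m) : sortedDesc f i = f ((Tuple.sort f) i.rev) := rfl

lemma smin_le {n k : ℕ} (B : Matrix (Fin n) (Fin k) ℂ) (j : Fin k) :
    smin B ≤ Real.sqrt ((Matrix.posSemidef_conjTranspose_mul_self B).isHermitian.eigenvalues j) := by
  obtain ⟨i, hi⟩ := sortedDesc_exists
    (fun i => Real.sqrt ((Matrix.posSemidef_conjTranspose_mul_self B).isHermitian.eigenvalues i)) j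
  have hb : BddBelow (Set.range (sv B)) := (Set.finite_range _).bddBelow
  have : smin B ≤ sv B i := ciInf_le hb i
  rwa [show sv B i = _ from hi] at this

lemma trace_eq_sum_eigenvalues {S : Matrix (Fin m) (Fin m) ℂ} (hS : S.IsHermitian) :
    S.trace = ∑ i, (hS.eigenvalues i : ℂ) := by
  conv_lhs => rw [hS.spectral_theorem, Unitary.conjStarAlgAut_apply]
  rw [Matrix.trace_mul_cycle]
  rw [show (star (hS.eigenvectorUnitary : Matrix (Fin m) (Fin m) ℂ) : Matrix (Fin m) (Fin m) ℂ) *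
      (hS.eigenvectorUnitary : Matrix (Fin m) (Fin m) ℂ) = 1 from
    Matrix.mem_unitaryGroup_iff'.mp hS.eigenvectorUnitary.2]
  rw [Matrix.one_mul, Matrix.trace_diagonal]
  rfl

lemma trace_sqrt {S : Matrix (Fin m) (Fin m) ℂ} (hS : S.PosSemidef) :
    (psdSqrt hS).trace = ∑ i, (Real.sqrt (hS.isHermitian.eigenvalues i) : ℂ) := by
  rw [psdSqrt, Matrix.trace_mul_cycle]
  rw [show (star (hS.1.eigenvectorUnitary : Matrix (Fin m) (Fin m) ℂ) : Matrix (Fin m) (Fin m) ℂ) *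
      (hS.1.eigenvectorUnitary : Matrix (Fin m) (Fin m) ℂ) = 1 from
    Matrix.mem_unitaryGroup_iff'.mp hS.1.eigenvectorUnitary.2]
  rw [Matrix.one_mul, Matrix.trace_diagonal]
  rfl

lemma psd_trace_nonneg {X : Matrix (Fin m) (Fin m) ℂ} (hX : X.PosSemidef) : 0 ≤ X.trace := by
  rw [trace_eq_sum_eigenvalues hX.1]
  exact Finset.sum_nonneg fun i _ => Complex.zero_le_real.mpr (hX.eigenvalues_nonneg i)

lemma trace_mul_psd_nonneg {X Y : Matrix (Fin m) (Fin m) ℂ} (hX : X.PosSemidef)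
    (hY : Y.PosSemidef) : 0 ≤ (X * Y).trace := by
  rw [← psdSqrt_mul_self hX, Matrix.mul_assoc, Matrix.trace_mul_comm]
  have h1 : (psdSqrt hX * Y * psdSqrt hX).PosSemidef := by
    nth_rewrite 2 [← (posSemidef_psdSqrt hX).isHermitian.eq]
    exact hY.mul_mul_conjTranspose_same (psdSqrt hX)
  exact psd_trace_nonneg h1

lemma sqrt_sub_smul_psd {S : Matrix (Fin m) (Fin m) ℂ} (hS : S.PosSemidef) {c : ℝ}
    (hc : ∀ i, c ≤ Real.sqrt (hS.isHermitian.eigenvalues i)) :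
    (psdSqrt hS - (c : ℂ) • 1).PosSemidef := by
  set V : Matrix (Fin m) (Fin m) ℂ := (hS.1.eigenvectorUnitary : Matrix (Fin m) (Fin m) ℂ) with hVdef
  have hVV : V * star V = 1 := Matrix.mem_unitaryGroup_iff.mp hS.1.eigenvectorUnitary.2
  have h1 : psdSqrt hS - (c : ℂ) • 1 =
      V * (Matrix.diagonal (fun i => ((Real.sqrt (hS.1.eigenvalues i) - c : ℝ) : ℂ))) * star V := by
    have h2 : (Matrix.diagonal (fun i => ((Real.sqrt (hS.1.eigenvalues i) - c : ℝ) : ℂ)))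
        = Matrix.diagonal ((↑) ∘ Real.sqrt ∘ hS.1.eigenvalues) - (c : ℂ) • 1 := by
      rw [← Matrix.diagonal_one, ← Matrix.diagonal_smul, Matrix.diagonal_sub]
      congr 1 with i
      push_cast
      simp
    rw [h2, Matrix.mul_sub, Matrix.sub_mul, psdSqrt]
    congr 1
    rw [Matrix.mul_smul, Matrix.mul_one, Matrix.smul_mul, hVV]
  rw [h1]
  have h3 : (Matrix.diagonal (fun i => ((Real.sqrt (hS.1.eigenvalues i) - c : ℝ) : ℂ))).PosSemidef := by
    refine Matrix.posSemidef_diagonal_iff.mpr fun i => ?_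
    exact Complex.zero_le_real.mpr (by linarith [hc i])
  have := h3.mul_mul_conjTranspose_same V
  rwa [← Matrix.star_eq_conjTranspose] at this

lemma eigenvalues_le_one {S : Matrix (Fin m) (Fin m) ℂ} (hS : S.PosSemidef)
    (h1 : ((1 : Matrix (Fin m) (Fin m) ℂ) - S).PosSemidef) (i : Fin m) :
    hS.isHermitian.eigenvalues i ≤ 1 := by
  set v : EuclideanSpace ℂ (Fin m) := hS.isHermitian.eigenvectorBasis i with hv
  have hmv : S *ᵥ ⇑v = hS.isHermitian.eigenvalues i • ⇑v :=
    hS.isHermitian.mulVec_eigenvectorBasis i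
  have hvv : dotProduct (star ⇑v) ⇑v = 1 := by
    have := hS.isHermitian.eigenvectorBasis.orthonormal.1 i
    have h2 : (inner ℂ v v : ℂ) = 1 := by
      rw [inner_self_eq_norm_sq_to_K, this]
      norm_num
    rw [← h2, EuclideanSpace.inner_eq_star_dotProduct, dotProduct_comm]
  have h3 := h1.dotProduct_mulVec_nonneg ⇑v
  rw [Matrix.sub_mulVec, Matrix.one_mulVec, hmv, dotProduct_sub,
    dotProduct_smul, hvv] at h3
  have h4 : (1 : ℂ) - hS.isHermitian.eigenvalues i • (1 : ℂ)
      = ((1 - hS.isHermitian.eigenvalues i : ℝ) : ℂ) := by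
    rw [Complex.real_smul]; push_cast; ring
  rw [h4] at h3
  have := Complex.zero_le_real.mp h3
  linarith

end Aux

lemma exists_unitary_trace {m : ℕ} (M : Matrix (Fin m) (Fin m) ℂ) :
    ∃ Q : Matrix (Fin m) (Fin m) ℂ, Qᴴ * Q = 1 ∧ (Qᴴ * M).trace = ((trNorm M : ℝ) : ℂ) := by
  classical
  set h : (Mᴴ * M).PosSemidef := Matrix.posSemidef_conjTranspose_mul_self M with hh
  set d : Fin m → ℝ := h.isHermitian.eigenvalues with hd
  set b := h.isHermitian.eigenvectorBasis with hb
  have hd0 : ∀ j, 0 ≤ d j := h.eigenvalues_nonneg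
  have key : ∀ i j : Fin m, dotProduct (star (M *ᵥ ⇑(b i))) (M *ᵥ ⇑(b j))
      = (d j : ℂ) * (if i = j then 1 else 0) := by
    intro i j
    have e1 : dotProduct (star (M *ᵥ ⇑(b i))) (M *ᵥ ⇑(b j))
        = dotProduct (star ⇑(b i)) ((Mᴴ * M) *ᵥ ⇑(b j)) := by
      rw [Matrix.star_mulVec, Matrix.dotProduct_mulVec, Matrix.vecMul_vecMul,
        ← Matrix.dotProduct_mulVec]
    rw [e1, h.isHermitian.mulVec_eigenvectorBasis j, dotProduct_smul]
    have e2 : dotProduct (star ⇑(b i)) ⇑(b j) = if i = j then 1 else 0 := by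
      rw [show dotProduct (star ⇑(b i)) ⇑(b j) = (inner ℂ (b i) (b j) : ℂ) by rw [dotProduct_comm]; rfl]
      exact orthonormal_iff_ite.mp b.orthonormal i j
    rw [e2, Complex.real_smul]
  set s : Set (Fin m) := {j | d j ≠ 0} with hs
  set u : Fin m → EuclideanSpace ℂ (Fin m) :=
    fun j => (((Real.sqrt (d j) : ℝ) : ℂ))⁻¹ • ((WithLp.equiv 2 _).symm (M *ᵥ ⇑(b j))) with hu
  have hinner : ∀ i j : Fin m,
      (inner ℂ ((WithLp.equiv 2 ((Fin m) → ℂ)).symm (M *ᵥ ⇑(b i)))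
        ((WithLp.equiv 2 ((Fin m) → ℂ)).symm (M *ᵥ ⇑(b j))) : ℂ)
      = (d j : ℂ) * (if i = j then 1 else 0) := by
    intro i j
    rw [← key i j, dotProduct_comm]
    rfl
  have horth : Orthonormal ℂ (s.restrict u) := by
    rw [orthonormal_iff_ite]
    rintro ⟨i, hi⟩ ⟨j, hj⟩
    have hdi : 0 < d i := lt_of_le_of_ne (hd0 i) (Ne.symm hi)
    have hdj : 0 < d j := lt_of_le_of_ne (hd0 j) (Ne.symm hj)
    simp only [Set.restrict, Set.domRestrict_apply, hu, inner_smul_left, inner_smul_right, hinner i j,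
      map_inv₀, Complex.conj_ofReal]
    by_cases hij : i = j
    · subst hij
      simp only [if_pos rfl, Subtype.mk.injEq, mul_one]
      rw [show ((d i : ℝ) : ℂ) = (Real.sqrt (d i) : ℂ) * (Real.sqrt (d i) : ℂ) by
        rw [← Complex.ofReal_mul, Real.mul_self_sqrt (hd0 i)]]
      have hs0 : (Real.sqrt (d i) : ℂ) ≠ 0 := by
        simpa using (Real.sqrt_ne_zero'.mpr hdi)
      field_simp
    · have : (⟨i, hi⟩ : s) ≠ ⟨j, hj⟩ := by simpa using hij
      rw [if_neg hij, if_neg this]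
      ring
  obtain ⟨c, hc⟩ := horth.exists_orthonormalBasis_extension_of_card_eq
    (by simp : Module.finrank ℂ (EuclideanSpace ℂ (Fin m)) = Fintype.card (Fin m))
  set U : Matrix (Fin m) (Fin m) ℂ := Matrix.of (fun x j => c j x) with hU
  set V : Matrix (Fin m) (Fin m) ℂ := (h.isHermitian.eigenvectorUnitary : Matrix (Fin m) (Fin m) ℂ)
    with hV
  have hUU : Uᴴ * U = 1 := by
    ext i j
    have e3 : (Uᴴ * U) i j = (inner ℂ (c i) (c j) : ℂ) := by
      simp only [Matrix.mul_apply, Matrix.conjTranspose_apply, hU, Matrix.of_apply]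
      rw [EuclideanSpace.inner_eq_star_dotProduct, dotProduct_comm]
      rfl
    rw [e3, orthonormal_iff_ite.mp c.orthonormal i j, Matrix.one_apply]
  have hVV : V * Vᴴ = 1 := by
    have := Matrix.mem_unitaryGroup_iff.mp h.isHermitian.eigenvectorUnitary.2
    rwa [← Matrix.star_eq_conjTranspose]
  refine ⟨U * Vᴴ, ?_, ?_⟩
  · rw [Matrix.conjTranspose_mul, Matrix.conjTranspose_conjTranspose, Matrix.mul_assoc,
      ← Matrix.mul_assoc Uᴴ, hUU, Matrix.one_mul, hVV]
  · have e4 : (U * Vᴴ)ᴴ * M = V * (Uᴴ * M) := by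
      rw [Matrix.conjTranspose_mul, Matrix.conjTranspose_conjTranspose, Matrix.mul_assoc]
    rw [e4, Matrix.trace_mul_comm, Matrix.mul_assoc, ← Matrix.mul_assoc]
    have e5 : (Uᴴ * M) * V = Uᴴ * (M * V) := by rw [Matrix.mul_assoc]
    rw [e5]
    have hMV : ∀ x j, (M * V) x j = (M *ᵥ ⇑(b j)) x := by
      intro x j
      simp [Matrix.mul_apply, Matrix.mulVec, dotProduct, hV,
        Matrix.IsHermitian.eigenvectorUnitary_apply]
      rfl
    have diag : ∀ j, (Uᴴ * (M * V)) j j = ((Real.sqrt (d j) : ℝ) : ℂ) := by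
      intro j
      have e6 : (Uᴴ * (M * V)) j j
          = (inner ℂ (c j) ((WithLp.equiv 2 ((Fin m) → ℂ)).symm (M *ᵥ ⇑(b j))) : ℂ) := by
        simp only [Matrix.mul_apply, Matrix.conjTranspose_apply, hU, Matrix.of_apply, hMV]
        rw [EuclideanSpace.inner_eq_star_dotProduct, dotProduct_comm]
        rfl
      by_cases hjs : j ∈ s
      · rw [e6, hc j hjs]
        simp only [hu, inner_smul_left, map_inv₀, Complex.conj_ofReal, hinner j j, if_pos rfl,
          ↓reduceIte, mul_one]
        have hdj : 0 < d j := lt_of_le_of_ne (hd0 j) (Ne.symm hjs)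
        rw [show ((d j : ℝ) : ℂ) = (Real.sqrt (d j) : ℂ) * (Real.sqrt (d j) : ℂ) by
          rw [← Complex.ofReal_mul, Real.mul_self_sqrt (hd0 j)]]
        have hs0 : (Real.sqrt (d j) : ℂ) ≠ 0 := by
          simpa using (Real.sqrt_ne_zero'.mpr hdj)
        field_simp
      · have hdj : d j = 0 := by simpa [hs] using hjs
        have hMv : (WithLp.equiv 2 ((Fin m) → ℂ)).symm (M *ᵥ ⇑(b j)) = 0 := by
          rw [← inner_self_eq_zero (𝕜 := ℂ)]
          rw [hinner j j, if_pos rfl, hdj]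
          simp
        rw [e6, hMv, inner_zero_right, hdj]
        simp
    have e7 : (Uᴴ * (M * V)).trace = ∑ j, ((Real.sqrt (d j) : ℝ) : ℂ) := by
      rw [Matrix.trace]
      exact Finset.sum_congr rfl fun j _ => by rw [Matrix.diag_apply, diag j]
    rw [e7, ← Complex.ofReal_sum]
    congr 1
    rw [trNorm]
    exact (sum_comp_sortedDesc (fun x => x) (fun i => Real.sqrt (d i))).symm

theorem sinTheta_le_eps_trNorm {n k : ℕ} (hkn : k ≤ n) (B P : Matrix (Fin n) (Fin k) ℂ)
    (hrank : B.rank = k) (hP : Pᴴ * P = 1) :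
    sinThetaF P (polarFactor B) ≤
      Real.sqrt (2 * (trNorm B - trNorm (Pᴴ * B)) / smin B) := by
  classical
  rcases Nat.eq_zero_or_pos k with hk0 | hkpos
  · subst hk0
    simp [sinThetaF]
  haveI : Nonempty (Fin k) := Fin.pos_iff_nonempty.mp hkpos
  set h : (Bᴴ * B).PosSemidef := Matrix.posSemidef_conjTranspose_mul_self B with hh
  set H : Matrix (Fin k) (Fin k) ℂ := psdSqrt h with hHdef
  have hHH : H * H = Bᴴ * B := psdSqrt_mul_self h
  have hHerm : Hᴴ = H := (posSemidef_psdSqrt h).isHermitian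
  have hrk : (Bᴴ * B).rank = k := by rw [Matrix.rank_conjTranspose_mul_self, hrank]
  have heig_ne : ∀ i, h.isHermitian.eigenvalues i ≠ 0 := by
    intro i hi
    have hcard := h.isHermitian.rank_eq_card_non_zero_eigs
    rw [hrk] at hcard
    have hlt : Fintype.card {j // h.isHermitian.eigenvalues j ≠ 0} < Fintype.card (Fin k) :=
      Fintype.card_subtype_lt (x := i) (by simpa using hi)
    rw [Fintype.card_fin] at hlt
    omega
  have heig_pos : ∀ i, 0 < h.isHermitian.eigenvalues i :=
    fun i => lt_of_le_of_ne (h.eigenvalues_nonneg i) (Ne.symm (heig_ne i))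
  have hdet : IsUnit H.det := by
    have h1 : H.det * H.det = (Bᴴ * B).det := by rw [← Matrix.det_mul, hHH]
    have h2 : (Bᴴ * B).det ≠ 0 := by
      rw [h.isHermitian.det_eq_prod_eigenvalues]
      exact Finset.prod_ne_zero_iff.mpr fun i _ => Complex.ofReal_ne_zero.mpr (heig_ne i)
    exact isUnit_iff_ne_zero.mpr (fun h0 => h2 (by rw [← h1, h0, mul_zero]))
  have hHinv : H⁻¹ * H = 1 := Matrix.nonsing_inv_mul H hdet
  have hHinv' : H * H⁻¹ = 1 := Matrix.mul_nonsing_inv H hdet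
  have hHinvH : (H⁻¹)ᴴ = H⁻¹ := by rw [Matrix.conjTranspose_nonsing_inv, hHerm]
  set P₀ : Matrix (Fin n) (Fin k) ℂ := polarFactor B with hP₀def
  have hP₀B : P₀ = B * H⁻¹ := rfl
  have hBPH : P₀ * H = B := by rw [hP₀B, Matrix.mul_assoc, hHinv, Matrix.mul_one]
  have hP₀orth : P₀ᴴ * P₀ = 1 := by
    rw [hP₀B, Matrix.conjTranspose_mul, hHinvH]
    have e : H⁻¹ * Bᴴ * (B * H⁻¹) = H⁻¹ * (Bᴴ * B) * H⁻¹ := by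
      simp only [Matrix.mul_assoc]
    rw [e, ← hHH, show H⁻¹ * (H * H) = H from by rw [← Matrix.mul_assoc, hHinv, Matrix.one_mul],
      hHinv']
  set A : Matrix (Fin k) (Fin k) ℂ := Pᴴ * P₀ with hA
  have hPB : Pᴴ * B = A * H := by rw [hA, Matrix.mul_assoc, hBPH]
  have hJ : ((1 : Matrix (Fin n) (Fin n) ℂ) - P * Pᴴ) * (1 - P * Pᴴ) = 1 - P * Pᴴ := by
    have h1 : P * Pᴴ * (P * Pᴴ) = P * Pᴴ := by
      rw [Matrix.mul_assoc, ← Matrix.mul_assoc Pᴴ, hP, Matrix.one_mul]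
    rw [Matrix.sub_mul, Matrix.one_mul, Matrix.mul_sub, Matrix.mul_one, h1, sub_self, sub_zero]
  have hJH : ((1 : Matrix (Fin n) (Fin n) ℂ) - P * Pᴴ)ᴴ = 1 - P * Pᴴ := by
    simp [Matrix.conjTranspose_sub, Matrix.conjTranspose_mul]
  have hone_sub_psd : ((1 : Matrix (Fin k) (Fin k) ℂ) - Aᴴ * A).PosSemidef := by
    have e1a : ((1 - P * Pᴴ) * P₀)ᴴ * ((1 - P * Pᴴ) * P₀)
        = 1 - (P₀ᴴ * P) * (Pᴴ * P₀) := by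
      rw [Matrix.conjTranspose_mul ((1 : Matrix (Fin n) (Fin n) ℂ) - P * Pᴴ) P₀, hJH,
        Matrix.mul_assoc, ← Matrix.mul_assoc ((1 : Matrix (Fin n) (Fin n) ℂ) - P * Pᴴ), hJ,
        Matrix.sub_mul, Matrix.one_mul, Matrix.mul_sub, hP₀orth]
      congr 1
      simp only [Matrix.mul_assoc]
    have e1 : (1 : Matrix (Fin k) (Fin k) ℂ) - Aᴴ * A
        = ((1 - P * Pᴴ) * P₀)ᴴ * ((1 - P * Pᴴ) * P₀) := by
      rw [e1a, hA, Matrix.conjTranspose_mul Pᴴ P₀, Matrix.conjTranspose_conjTranspose P]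
    rw [e1]
    exact Matrix.posSemidef_conjTranspose_mul_self _
  obtain ⟨Q, hQ1, hQtr⟩ := exists_unitary_trace (Pᴴ * B)
  have hNid : (Q - A)ᴴ * (Q - A) + (1 - Aᴴ * A)
      = (1 + 1 : Matrix (Fin k) (Fin k) ℂ) - Qᴴ * A - Aᴴ * Q := by
    rw [Matrix.conjTranspose_sub, Matrix.sub_mul, Matrix.mul_sub, Matrix.mul_sub, hQ1]
    abel
  have hN : ((1 + 1 : Matrix (Fin k) (Fin k) ℂ) - Qᴴ * A - Aᴴ * Q).PosSemidef := by
    rw [← hNid]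
    exact (Matrix.posSemidef_conjTranspose_mul_self _).add hone_sub_psd
  set c : ℝ := smin B with hc
  have hcle : ∀ i, c ≤ Real.sqrt (h.isHermitian.eigenvalues i) := fun i => smin_le B i
  have hHc : (H - (c : ℂ) • 1).PosSemidef := sqrt_sub_smul_psd h hcle
  have hcpos : 0 < c := by
    have hall : ∀ j, 0 < sv B j := by
      intro j
      simp only [sv, sortedDesc_eq]
      exact Real.sqrt_pos.mpr (heig_pos _)
    obtain ⟨j0, hj0⟩ := Finite.exists_min (sv B)
    have : (0 : ℝ) < ⨅ i, sv B i := lt_of_lt_of_le (hall j0) (le_ciInf hj0)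
    rw [hc]
    unfold smin
    exact this
  have I1 : 0 ≤ (((1 + 1 : Matrix (Fin k) (Fin k) ℂ) - Qᴴ * A - Aᴴ * Q)
      * (H - (c : ℂ) • 1)).trace := trace_mul_psd_nonneg hN hHc
  set z : ℂ := (Qᴴ * A).trace with hz
  have hAQtr : (Aᴴ * Q).trace = star z := by
    rw [hz, ← Matrix.trace_conjTranspose, Matrix.conjTranspose_mul Qᴴ A,
      Matrix.conjTranspose_conjTranspose Q]
  have hHtr : H.trace = ((trNorm B : ℝ) : ℂ) := by
    rw [hHdef, trace_sqrt h, ← Complex.ofReal_sum]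
    congr 1
    rw [trNorm]
    exact (sum_comp_sortedDesc (fun x => x) _).symm
  have hQAH : (Qᴴ * A * H).trace = ((trNorm (Pᴴ * B) : ℝ) : ℂ) := by
    rw [Matrix.mul_assoc, ← hPB]
    exact hQtr
  have hAQH : (Aᴴ * Q * H).trace = ((trNorm (Pᴴ * B) : ℝ) : ℂ) := by
    calc (Aᴴ * Q * H).trace = (H * (Aᴴ * Q)).trace := (Matrix.trace_mul_comm _ _).symm
      _ = ((Qᴴ * A * H)ᴴ).trace := by
          rw [Matrix.conjTranspose_mul (Qᴴ * A) H, Matrix.conjTranspose_mul Qᴴ A,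
            Matrix.conjTranspose_conjTranspose Q, hHerm]
      _ = star ((Qᴴ * A * H).trace) := Matrix.trace_conjTranspose _
      _ = ((trNorm (Pᴴ * B) : ℝ) : ℂ) := by rw [hQAH, Complex.star_def, Complex.conj_ofReal]
  simp only [Matrix.mul_sub, Matrix.sub_mul, Matrix.add_mul, Matrix.one_mul, Matrix.mul_smul,
    Matrix.mul_one, Matrix.trace_sub, Matrix.trace_add, Matrix.trace_smul, Matrix.trace_one,
    Fintype.card_fin] at I1
  rw [hHtr, hQAH, hAQH, hAQtr, ← hz] at I1
  have hI1re := (Complex.le_def.mp I1).1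
  simp only [Complex.zero_re, Complex.sub_re, Complex.add_re, Complex.ofReal_re,
    smul_eq_mul, Complex.mul_re, Complex.ofReal_im, Complex.conj_re, Complex.conj_im,
    Complex.star_def, Complex.natCast_re, Complex.natCast_im, zero_mul, sub_zero,
    add_zero, neg_zero] at hI1re
  -- hI1re : 0 ≤ trNorm B + trNorm B - trNorm (PᴴB) - trNorm (PᴴB) - c * (k + k - z.re - z.re)
  have hIneq1 : c * ((k : ℝ) - z.re) ≤ trNorm B - trNorm (Pᴴ * B) := by nlinarith [hI1re]
  have hA2 : ((Pᴴ * P₀)ᴴ * (Pᴴ * P₀)).PosSemidef := Matrix.posSemidef_conjTranspose_mul_self _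
  set t : ℝ := ∑ i, (Matrix.posSemidef_conjTranspose_mul_self (Pᴴ * P₀)).isHermitian.eigenvalues i
    with ht
  have hAAtr : (Aᴴ * A).trace = ((t : ℝ) : ℂ) := by
    rw [hA, trace_eq_sum_eigenvalues hA2.isHermitian, ← Complex.ofReal_sum, ht]
  have heigA_nonneg : ∀ i,
      0 ≤ (Matrix.posSemidef_conjTranspose_mul_self (Pᴴ * P₀)).isHermitian.eigenvalues i :=
    (Matrix.posSemidef_conjTranspose_mul_self (Pᴴ * P₀)).eigenvalues_nonneg
  have heigA_le : ∀ i,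
      (Matrix.posSemidef_conjTranspose_mul_self (Pᴴ * P₀)).isHermitian.eigenvalues i ≤ 1 :=
    fun i => eigenvalues_le_one (Matrix.posSemidef_conjTranspose_mul_self (Pᴴ * P₀))
      hone_sub_psd i
  have hF := psd_trace_nonneg (Matrix.posSemidef_conjTranspose_mul_self (Q - A))
  rw [Matrix.conjTranspose_sub, Matrix.sub_mul, Matrix.mul_sub, Matrix.mul_sub, hQ1,
    Matrix.trace_sub, Matrix.trace_sub, Matrix.trace_sub, Matrix.trace_one, hAAtr, hAQtr,
    ← hz] at hF
  have hFre := (Complex.le_def.mp hF).1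
  simp only [Complex.zero_re, Complex.sub_re, Complex.add_re, Complex.ofReal_re,
    Complex.conj_re, Complex.star_def, Complex.natCast_re, Fintype.card_fin] at hFre
  have hI2 : (k : ℝ) - t ≤ 2 * ((k : ℝ) - z.re) := by linarith
  have hsin : ∀ j, Real.sin (Real.arccos (Real.sqrt
      ((Matrix.posSemidef_conjTranspose_mul_self (Pᴴ * P₀)).isHermitian.eigenvalues j))) ^ 2
      = 1 - (Matrix.posSemidef_conjTranspose_mul_self (Pᴴ * P₀)).isHermitian.eigenvalues j := by
    intro j
    rw [Real.sin_arccos, Real.sq_sqrt (heigA_nonneg j),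
      Real.sq_sqrt (by linarith [heigA_le j] : (0:ℝ) ≤ 1 -
        (Matrix.posSemidef_conjTranspose_mul_self (Pᴴ * P₀)).isHermitian.eigenvalues j)]
  have hsum : ∑ i, Real.sin (Real.arccos (sv (Pᴴ * P₀) i)) ^ 2 = (k : ℝ) - t := by
    have e2 : ∑ i, Real.sin (Real.arccos (sv (Pᴴ * P₀) i)) ^ 2
        = ∑ j, Real.sin (Real.arccos (Real.sqrt
          ((Matrix.posSemidef_conjTranspose_mul_self (Pᴴ * P₀)).isHermitian.eigenvalues j))) ^ 2 :=
      sum_comp_sortedDesc (fun x => Real.sin (Real.arccos x) ^ 2) _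
    rw [e2, Finset.sum_congr rfl fun j _ => hsin j, Finset.sum_sub_distrib, Finset.sum_const,
      Finset.card_univ, Fintype.card_fin, ht]
    simp [nsmul_eq_mul]
  rw [sinThetaF, hsum]
  apply Real.sqrt_le_sqrt
  rw [le_div_iff₀ hcpos]
  calc ((k : ℝ) - t) * c ≤ (2 * ((k : ℝ) - z.re)) * c :=
        mul_le_mul_of_nonneg_right hI2 hcpos.le
    _ = 2 * (c * ((k : ℝ) - z.re)) := by ring
    _ ≤ 2 * (trNorm B - trNorm (Pᴴ * B)) := by linarith [hIneq1]
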